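/- Let p ≥ 1 and let [ℓ_1,u_1),…,[ℓ_p,u_p) be nonempty half-open real intervals sorted so that ℓ_1 ≤ … ≤ ℓ_p. Define indices b_1 = 1 and, inductively, as long as b_j ≤ p, let b_{j+1} be the least index h with b_j < h ≤ p and ℓ_h ≥ min_{b_j ≤ g < h} u_g, or b_{j+1} = p+1 if no such h exists; let k be the unique index with b_{k+1} = p+1. For j = 1,…,k set t_j = min_{b_j ≤ g < b_{j+1}} u_g and s_j = (ℓ_{b_{j+1}−1} + t_j)/2. Then: (a) for every j and every g with b_j ≤ g < b_{j+1} one has s_j ∈ [ℓ_g, u_g), so the set {s_1,…,s_k} pierces the whole family; and (b) every set S ⊆ ℝ that pierces the whole family has at least k elements; hence the piercing number of the family equals k. (This is the correctness of Algorithm Min_IntSet: its output is a minimum set intersecting all the given intervals.) -/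

import Mathlib

/-- Correctness of Algorithm Min_IntSet: given sorted nonempty half-open intervals
`[ℓ h, u h)` for `h = 1,…,p`, the indices `b 1 = 1 < b 2 < … < b (k+1) = p+1`
produced by the algorithm (characterized by `hbrec`) yield points
`s j = (ℓ (b (j+1) - 1) + t j)/2` (with `t j` the block minimum of the upper
endpoints) such that (a) `s j` lies in every interval of its block, so
`{s 1, …, s k}` pierces the whole family, (b) every finite piercing set has at
least `k` elements, and hence the piercing number of the family equals `k`. -/
theorem min_intset_correct
    (p : ℕ) (hp : 1 ≤ p) (ℓ u : ℕ → ℝ)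
    (hne : ∀ h, 1 ≤ h → h ≤ p → ℓ h < u h)
    (hsorted : ∀ h, 1 ≤ h → h < p → ℓ h ≤ ℓ (h + 1))
    (b : ℕ → ℕ) (k : ℕ)
    (hb1 : b 1 = 1)
    (hbrec : ∀ j, 1 ≤ j → j ≤ k →
      ((∃ h, b j < h ∧ h ≤ p ∧ sInf (u '' Set.Ico (b j) h) ≤ ℓ h) →
        IsLeast {h | b j < h ∧ h ≤ p ∧ sInf (u '' Set.Ico (b j) h) ≤ ℓ h} (b (j + 1))) ∧
      ((¬ ∃ h, b j < h ∧ h ≤ p ∧ sInf (u '' Set.Ico (b j) h) ≤ ℓ h) →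
        b (j + 1) = p + 1))
    (hbk : ∀ j, 1 ≤ j → j ≤ k → b j ≤ p)
    (hbk1 : b (k + 1) = p + 1)
    (t s : ℕ → ℝ)
    (ht : ∀ j, 1 ≤ j → j ≤ k → t j = sInf (u '' Set.Ico (b j) (b (j + 1))))
    (hs : ∀ j, 1 ≤ j → j ≤ k → s j = (ℓ (b (j + 1) - 1) + t j) / 2) :
    (∀ j, 1 ≤ j → j ≤ k → ∀ g, b j ≤ g → g < b (j + 1) → s j ∈ Set.Ico (ℓ g) (u g)) ∧
    (∀ S : Finset ℝ, (∀ h, 1 ≤ h → h ≤ p → ∃ x ∈ S, x ∈ Set.Ico (ℓ h) (u h)) →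
      k ≤ S.card) ∧
    sInf {n | ∃ S : Finset ℝ, S.card = n ∧
      ∀ h, 1 ≤ h → h ≤ p → ∃ x ∈ S, x ∈ Set.Ico (ℓ h) (u h)} = k := by
  -- basic finiteness facts about infima of finite image sets
  have hbdd : ∀ a c : ℕ, BddBelow (u '' Set.Ico a c) := fun a c =>
    ((Set.finite_Ico a c).image u).bddBelow
  have hmem : ∀ a c : ℕ, a < c → sInf (u '' Set.Ico a c) ∈ u '' Set.Ico a c := fun a c h =>
    ((Set.nonempty_Ico.mpr h).image u).csInf_mem ((Set.finite_Ico a c).image u)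
  -- monotonicity of ℓ
  have hℓmono : ∀ a c, 1 ≤ a → a ≤ c → c ≤ p → ℓ a ≤ ℓ c := by
    intro a c ha hac hcp
    induction c with
    | zero => omega
    | succ n ih =>
      rcases eq_or_lt_of_le hac with rfl | h
      · exact le_refl _
      · rcases Nat.eq_or_lt_of_le (by omega : a ≤ n) with rfl | _
        · exact hsorted a ha (by omega)
        · exact (ih (by omega) (by omega)).trans (hsorted n (by omega) (by omega))
  -- b strictly increases on each algorithm step
  have hbstep : ∀ j, 1 ≤ j → j ≤ k → b j < b (j + 1) := by
    intro j h1 h2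
    obtain ⟨hL, hE⟩ := hbrec j h1 h2
    by_cases hex : ∃ h, b j < h ∧ h ≤ p ∧ sInf (u '' Set.Ico (b j) h) ≤ ℓ h
    · exact (hL hex).1.1
    · have h3 := hE hex; have h4 := hbk j h1 h2; omega
  have hble : ∀ j, 1 ≤ j → j ≤ k → b (j + 1) ≤ p + 1 := by
    intro j h1 h2
    obtain ⟨hL, hE⟩ := hbrec j h1 h2
    by_cases hex : ∃ h, b j < h ∧ h ≤ p ∧ sInf (u '' Set.Ico (b j) h) ≤ ℓ h
    · have := (hL hex).1.2.1; omega
    · rw [hE hex]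
  have hbmono : ∀ i j, 1 ≤ i → i ≤ j → j ≤ k + 1 → b i ≤ b j := by
    intro i j hi hij hjk
    induction j with
    | zero => omega
    | succ n ih =>
      rcases eq_or_lt_of_le hij with rfl | h
      · exact le_refl _
      · have h1 : b i ≤ b n := ih (by omega) (by omega)
        have h2 : b n < b (n + 1) := hbstep n (by omega) (by omega)
        omega
  have hb1le : ∀ j, 1 ≤ j → j ≤ k + 1 → 1 ≤ b j := by
    intro j h1 h2
    have := hbmono 1 j le_rfl h1 h2
    omega
  have hk1 : 1 ≤ k := by
    by_contra h
    have hk0 : k = 0 := by omega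
    rw [hk0] at hbk1
    simp only [Nat.zero_add] at hbk1
    omega
  -- the element just before a block boundary fails the jump condition
  have hnotmem : ∀ j, 1 ≤ j → j ≤ k → b j < b (j + 1) - 1 →
      ℓ (b (j + 1) - 1) < sInf (u '' Set.Ico (b j) (b (j + 1) - 1)) := by
    intro j h1 h2 hlt
    by_contra hcon
    push_neg at hcon
    have hmp : b (j + 1) - 1 ≤ p := by have := hble j h1 h2; omega
    obtain ⟨hL, hE⟩ := hbrec j h1 h2
    by_cases hex : ∃ h, b j < h ∧ h ≤ p ∧ sInf (u '' Set.Ico (b j) h) ≤ ℓ h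
    · have hlb := (hL hex).2 (show b (j + 1) - 1 ∈ _ from ⟨hlt, hmp, hcon⟩)
      have := hbstep j h1 h2
      omega
    · exact hex ⟨b (j + 1) - 1, hlt, hmp, hcon⟩
  -- key: left endpoint of the last interval of a block is below the block min
  have hkey : ∀ j, 1 ≤ j → j ≤ k → ℓ (b (j + 1) - 1) < t j := by
    intro j h1 h2
    have hstep := hbstep j h1 h2
    have hle := hble j h1 h2
    have hbj1 : 1 ≤ b j := hb1le j h1 (by omega)
    have hm1 : b (j + 1) = (b (j + 1) - 1) + 1 := by omega
    rw [ht j h1 h2]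
    obtain ⟨g0, hg0, hug0⟩ := hmem (b j) (b (j + 1)) hstep
    have hg0a : b j ≤ g0 := hg0.1
    have hg0b : g0 < b (j + 1) := hg0.2
    rw [← hug0]
    rcases eq_or_lt_of_le (by omega : g0 ≤ b (j + 1) - 1) with hg | hglt
    · rw [← hg]; exact hne g0 (by omega) (by omega)
    · have hnot := hnotmem j h1 h2 (by omega)
      calc ℓ (b (j + 1) - 1) < sInf (u '' Set.Ico (b j) (b (j + 1) - 1)) := hnot
        _ ≤ u g0 := csInf_le (hbdd _ _) ⟨g0, ⟨hg0.1, hglt⟩, rfl⟩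
  -- Part (a)
  have partA : ∀ j, 1 ≤ j → j ≤ k → ∀ g, b j ≤ g → g < b (j + 1) →
      s j ∈ Set.Ico (ℓ g) (u g) := by
    intro j h1 h2 g hg1 hg2
    have hkey' := hkey j h1 h2
    have htle : t j ≤ u g := by
      rw [ht j h1 h2]; exact csInf_le (hbdd _ _) ⟨g, ⟨hg1, hg2⟩, rfl⟩
    have hbj1 : 1 ≤ b j := hb1le j h1 (by omega)
    have hmp : b (j + 1) - 1 ≤ p := by have := hble j h1 h2; omega
    have hℓg : ℓ g ≤ ℓ (b (j + 1) - 1) := hℓmono g _ (by omega) (by omega) hmp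
    rw [hs j h1 h2]
    constructor
    · show ℓ g ≤ _; linarith
    · show _ < u g; linarith
  -- every interval index lies in some block
  have hcover : ∀ h, 1 ≤ h → h ≤ p → ∃ j, 1 ≤ j ∧ j ≤ k ∧ b j ≤ h ∧ h < b (j + 1) := by
    intro h hh1 hhp
    set T := (Finset.Icc 1 k).filter (fun j => b j ≤ h) with hT
    have h1T : 1 ∈ T := by
      rw [hT, Finset.mem_filter, Finset.mem_Icc]
      exact ⟨⟨le_rfl, hk1⟩, by omega⟩
    have hTne : T.Nonempty := ⟨1, h1T⟩
    set j := T.max' hTne with hj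
    have hjT : j ∈ T := T.max'_mem hTne
    rw [hT, Finset.mem_filter, Finset.mem_Icc] at hjT
    refine ⟨j, hjT.1.1, hjT.1.2, hjT.2, ?_⟩
    by_cases hjk : j = k
    · rw [hjk, hbk1]; omega
    · by_contra hcon
      push_neg at hcon
      have hmemT : j + 1 ∈ T := by
        rw [hT, Finset.mem_filter, Finset.mem_Icc]
        exact ⟨⟨by omega, by omega⟩, hcon⟩
      have := T.le_max' _ hmemT
      omega
  -- block minimum is at most the next block's left endpoint
  have htℓ : ∀ j, 1 ≤ j → j + 1 ≤ k → t j ≤ ℓ (b (j + 1)) := by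
    intro j h1 h2
    obtain ⟨hL, hE⟩ := hbrec j h1 (by omega)
    by_cases hex : ∃ h, b j < h ∧ h ≤ p ∧ sInf (u '' Set.Ico (b j) h) ≤ ℓ h
    · rw [ht j h1 (by omega)]; exact (hL hex).1.2.2
    · have h3 := hE hex
      have h4 := hbk (j + 1) (by omega) h2
      omega
  -- Part (b)
  have partB : ∀ S : Finset ℝ,
      (∀ h, 1 ≤ h → h ≤ p → ∃ x ∈ S, x ∈ Set.Ico (ℓ h) (u h)) → k ≤ S.card := by
    intro S hS
    have hx : ∀ j, ∃ y, 1 ≤ j → j ≤ k →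
        y ∈ S ∧ ∃ g, b j ≤ g ∧ g < b (j + 1) ∧ ℓ g ≤ y ∧ y < t j := by
      intro j
      by_cases hj : 1 ≤ j ∧ j ≤ k
      · obtain ⟨g0, hg0, hug0⟩ := hmem (b j) (b (j + 1)) (hbstep j hj.1 hj.2)
        have hg0a : b j ≤ g0 := hg0.1
        have hg0b : g0 < b (j + 1) := hg0.2
        have hbj1 : 1 ≤ b j := hb1le j hj.1 (by omega)
        have hle := hble j hj.1 hj.2
        obtain ⟨y, hyS, hy⟩ := hS g0 (by omega) (by omega)
        refine ⟨y, fun _ _ => ⟨hyS, g0, hg0.1, hg0.2, hy.1, ?_⟩⟩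
        rw [ht j hj.1 hj.2, ← hug0]
        exact hy.2
      · exact ⟨0, fun hj1 hj2 => absurd ⟨hj1, hj2⟩ hj⟩
    choose x hx using hx
    have hmono : ∀ i j, 1 ≤ i → i < j → j ≤ k → x i < x j := by
      intro i j hi hij hjk
      obtain ⟨hxiS, gi, hgi1, hgi2, hgi3, hgi4⟩ := hx i hi (by omega)
      obtain ⟨hxjS, gj, hgj1, hgj2, hgj3, hgj4⟩ := hx j (by omega) hjk
      have h1 : t i ≤ ℓ (b (i + 1)) := htℓ i hi (by omega)
      have h2 : ℓ (b (i + 1)) ≤ ℓ (b j) :=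
        hℓmono _ _ (hb1le (i + 1) (by omega) (by omega))
          (hbmono (i + 1) j (by omega) (by omega) (by omega)) (hbk j (by omega) hjk)
      have h3 : ℓ (b j) ≤ ℓ gj := by
        have := hble j (by omega) hjk
        exact hℓmono _ _ (hb1le j (by omega) (by omega)) hgj1 (by omega)
      linarith
    calc k = (Finset.Icc 1 k).card := by rw [Nat.card_Icc]; omega
      _ ≤ S.card := by
          apply Finset.card_le_card_of_injOn x
          · intro j hj
            rw [Finset.coe_Icc, Set.mem_Icc] at hj
            exact (hx j hj.1 hj.2).1
          · intro a ha c hc hac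
            rw [Finset.coe_Icc, Set.mem_Icc] at ha hc
            by_contra hne'
            rcases lt_trichotomy a c with h | h | h
            · exact absurd hac (ne_of_lt (hmono a c ha.1 h hc.2))
            · exact hne' h
            · exact absurd hac.symm (ne_of_lt (hmono c a hc.1 h ha.2))
  refine ⟨partA, partB, ?_⟩
  -- the explicit piercing set of size k
  set S0 := (Finset.Icc 1 k).image s with hS0def
  have hS0 : ∀ h, 1 ≤ h → h ≤ p → ∃ y ∈ S0, y ∈ Set.Ico (ℓ h) (u h) := by
    intro h h1 h2
    obtain ⟨j, hj1, hj2, hj3, hj4⟩ := hcover h h1 h2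
    exact ⟨s j, Finset.mem_image_of_mem s (Finset.mem_Icc.mpr ⟨hj1, hj2⟩),
      partA j hj1 hj2 h hj3 hj4⟩
  have hS0card : S0.card = k := by
    refine le_antisymm ?_ (partB S0 hS0)
    calc S0.card ≤ (Finset.Icc 1 k).card := Finset.card_image_le
      _ = k := by rw [Nat.card_Icc]; omega
  apply le_antisymm
  · exact Nat.sInf_le ⟨S0, hS0card, hS0⟩
  · refine le_csInf ⟨k, S0, hS0card, hS0⟩ ?_
    rintro n ⟨S, rfl, hSp⟩
    exact partB S hSp
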